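/- Every left Leibniz algebra (an algebra satisfying x(yz) = (xy)z + y(xz)) is a terminal algebra, i.e., satisfies [[[P,a],P],P] = 0 for all a. -/
import Mathlib


def kbr1 {V : Type*} [AddCommGroup V] (A : V → V) (B : V → V → V) : V → V → V :=
  fun x y => A (B x y) - B (A x) y - B x (A y)

def kbr2 {V : Type*} [AddCommGroup V] (B C : V → V → V) : V → V → V → V :=
  fun x y z => B (C x y) z + B x (C y z) + B y (C x z)
    - C (B x y) z - C x (B y z) - C y (B x z)

def IsTerminal {V : Type*} [AddCommGroup V] (P : V → V → V) : Prop :=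
  ∀ a x y z, kbr2 (kbr1 (fun w => P a w) P) P x y z = 0

/-- Every left Leibniz algebra is terminal. -/
theorem stmt2 {V : Type*} [AddCommGroup V] [Module ℂ V]
    (mul : V →ₗ[ℂ] V →ₗ[ℂ] V)
    (hLeib : ∀ a x y, mul a (mul x y) = mul (mul a x) y + mul x (mul a y)) :
    IsTerminal (fun x y => mul x y) := by
  intro a x y z
  have h0 : ∀ u v, kbr1 (fun w => mul a w) (fun x y => mul x y) u v = 0 := by
    intro u v
    simp [kbr1, hLeib a u v]
  simp [kbr2, h0]
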